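/- For μ > 0, the function h(α) = ½α² + e^{-α}(α + 1) divided by g(α) = α + e^{-α} (i.e., the scaled average age μ·Δ̄(τ) with α = μτ from the B = 1 formula) satisfies: h(α)/g(α) → ∞ as α → ∞, h(α)/g(α) → 1 as α → 0⁺, and h/g attains a minimum at the unique α* > 0 with (α*)² = 2e^{-α*}. -/

import Mathlib

open Filter

noncomputable def Fc : ℝ → ℝ :=
  fun α => ((1/2) * α ^ 2 + Real.exp (-α) * (α + 1)) / (α + Real.exp (-α))

noncomputable def phi (α : ℝ) : ℝ := α ^ 2 - 2 * Real.exp (-α)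

lemma gpos (α : ℝ) : 0 < α + Real.exp (-α) := by
  have := Real.add_one_le_exp (-α)
  linarith

lemma hasDerivFc (α : ℝ) : HasDerivAt Fc
    ((1 - Real.exp (-α)) * ((1/2) * α ^ 2 - Real.exp (-α)) / (α + Real.exp (-α)) ^ 2) α := by
  have he : HasDerivAt (fun x : ℝ => Real.exp (-x)) (Real.exp (-α) * (-1)) α :=
    ((hasDerivAt_id α).neg).exp
  have hnum : HasDerivAt (fun x : ℝ => (1/2) * x ^ 2 + Real.exp (-x) * (x + 1))
      ((1/2) * (2 * α ^ 1) + (Real.exp (-α) * (-1) * (α + 1) + Real.exp (-α) * 1)) α := by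
    have h1 := (hasDerivAt_pow 2 α).const_mul (1/2 : ℝ)
    have h2 := he.mul ((hasDerivAt_id α).add_const 1)
    exact (h1.add h2).congr_deriv (by norm_num [id])
  have hden : HasDerivAt (fun x : ℝ => x + Real.exp (-x)) (1 + Real.exp (-α) * (-1)) α :=
    (hasDerivAt_id α).add he
  have H := hnum.div hden (gpos α).ne'
  refine H.congr_deriv ?_
  have hg := (gpos α).ne'
  rw [div_left_inj' (pow_ne_zero 2 hg)]
  ring

lemma phiStrict : StrictMono phi := by
  have hd : ∀ α : ℝ, HasDerivAt phi (2 * α ^ 1 - 2 * (Real.exp (-α) * (-1))) α := fun α =>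
    (hasDerivAt_pow 2 α).sub ((((hasDerivAt_id α).neg).exp).const_mul 2)
  apply strictMono_of_deriv_pos
  intro α
  rw [(hd α).deriv]
  have := Real.add_one_le_exp (-α)
  have := Real.exp_pos (-α)
  simp only [pow_one]
  nlinarith

lemma exp_le_one' {α : ℝ} (hα : 0 ≤ α) : Real.exp (-α) ≤ 1 := by
  rw [Real.exp_le_one_iff]; linarith

/-- with `h(α) = ½α² + e^{-α}(α+1)` and `g(α) = α + e^{-α}` (the
scaled `B = 1` average-age formula `μ·Δ̄` with `α = μτ`), the ratio `h/g` tends to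
`∞` as `α → ∞`, tends to `1` as `α → 0⁺`, and attains its minimum over `(0,∞)` at
the unique `α* > 0` satisfying `(α*)² = 2 e^{-α*}`. -/
theorem stmt_13 (h g : ℝ → ℝ)
    (hh : ∀ α, h α = (1/2) * α ^ 2 + Real.exp (-α) * (α + 1))
    (hg : ∀ α, g α = α + Real.exp (-α)) :
    Tendsto (fun α => h α / g α) atTop atTop ∧
    Tendsto (fun α => h α / g α) (nhdsWithin 0 (Set.Ioi 0)) (nhds 1) ∧
    ∃ αs : ℝ, 0 < αs ∧ αs ^ 2 = 2 * Real.exp (-αs) ∧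
      (∀ α > (0:ℝ), h αs / g αs ≤ h α / g α) ∧
      (∀ β > (0:ℝ), β ^ 2 = 2 * Real.exp (-β) → β = αs) := by
  have hFc : ∀ α, h α / g α = Fc α := by
    intro α; rw [hh, hg]; rfl
  refine ⟨?_, ?_, ?_⟩
  · -- tends to atTop
    have h1 : Tendsto (fun α : ℝ => α / 4) atTop atTop :=
      (tendsto_id.atTop_div_const (by norm_num))
    apply tendsto_atTop_mono' _ _ h1
    filter_upwards [eventually_ge_atTop (1:ℝ)] with α hα
    have hgp := gpos α
    have he1 : Real.exp (-α) ≤ 1 := exp_le_one' (by linarith)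
    have he0 : 0 ≤ Real.exp (-α) := (Real.exp_pos _).le
    rw [hFc, Fc, le_div_iff₀ hgp]
    nlinarith
  · -- limit 1 at 0+
    have hc : ContinuousAt Fc 0 := (hasDerivFc 0).differentiableAt.continuousAt
    have h2 : Tendsto Fc (nhdsWithin 0 (Set.Ioi 0)) (nhds (Fc 0)) :=
      hc.continuousWithinAt.tendsto
    have hF0 : Fc 0 = 1 := by simp [Fc]
    rw [hF0] at h2
    refine h2.congr (fun α => (hFc α).symm)
  · -- minimizer
    have hφc : Continuous phi := by
      unfold phi; continuity
    have h02 : (0:ℝ) ≤ 2 := by norm_num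
    have hmem : (0:ℝ) ∈ Set.Ioo (phi 0) (phi 2) := by
      constructor
      · simp only [phi]; norm_num
      · have : Real.exp (-2) ≤ 1 := exp_le_one' (by norm_num)
        simp only [phi]; nlinarith
    obtain ⟨αs, hαsmem, hαs0⟩ := intermediate_value_Ioo h02 hφc.continuousOn hmem
    have hαspos : 0 < αs := hαsmem.1
    have hroot : αs ^ 2 = 2 * Real.exp (-αs) := by
      have : αs ^ 2 - 2 * Real.exp (-αs) = 0 := hαs0
      linarith
    refine ⟨αs, hαspos, hroot, ?_, ?_⟩
    · -- minimality
      intro α hα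
      rw [hFc, hFc]
      have hdiff : ∀ x : ℝ, DifferentiableAt ℝ Fc x := fun x =>
        (hasDerivFc x).differentiableAt
      rcases le_total α αs with hle | hle
      · have hA : AntitoneOn Fc (Set.Icc 0 αs) := by
          apply antitoneOn_of_deriv_nonpos (convex_Icc 0 αs)
          · exact fun x _ => (hdiff x).continuousAt.continuousWithinAt
          · exact fun x _ => (hdiff x).differentiableWithinAt
          · intro x hx
            rw [interior_Icc] at hx
            rw [(hasDerivFc x).deriv]
            have hx0 : 0 < x := hx.1
            have hphix : phi x < 0 := by
              have := phiStrict hx.2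
              rw [hαs0] at this; exact this
            have h1 : 0 ≤ 1 - Real.exp (-x) := by
              have := exp_le_one' hx0.le; linarith
            have h2 : (1/2) * x ^ 2 - Real.exp (-x) ≤ 0 := by
              simp only [phi] at hphix; linarith
            have h3 : (0:ℝ) ≤ (x + Real.exp (-x)) ^ 2 := sq_nonneg _
            apply div_nonpos_iff.mpr
            exact Or.inr ⟨by nlinarith, h3⟩
        exact hA ⟨hα.le, hle⟩ ⟨hαspos.le, le_refl _⟩ hle
      · have hM : MonotoneOn Fc (Set.Ici αs) := by
          apply monotoneOn_of_deriv_nonneg (convex_Ici αs)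
          · exact fun x _ => (hdiff x).continuousAt.continuousWithinAt
          · exact fun x _ => (hdiff x).differentiableWithinAt
          · intro x hx
            rw [interior_Ici] at hx
            rw [(hasDerivFc x).deriv]
            have hx0 : 0 < x := lt_trans hαspos hx
            have hphix : 0 < phi x := by
              have := phiStrict hx
              rw [hαs0] at this; exact this
            have h1 : 0 ≤ 1 - Real.exp (-x) := by
              have := exp_le_one' hx0.le; linarith
            have h2 : 0 ≤ (1/2) * x ^ 2 - Real.exp (-x) := by
              simp only [phi] at hphix; linarith
            positivity
        exact hM Set.self_mem_Ici hle hle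
    · -- uniqueness
      intro β hβ hβeq
      have hb : phi β = 0 := by simp only [phi]; linarith
      exact phiStrict.injective (hb.trans hαs0.symm)
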